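/- For any real γ > -1, ∫₀¹ dν / ((1+γν)² √(ν(1-ν))) = π(2+γ) / (2(1+γ)^{3/2}). -/

import Mathlib

open Real

open Set in
private lemma hp_pos (γ : ℝ) (hγ : γ > -1) {x : ℝ} (h0 : 0 ≤ x) (h1 : x ≤ 1) :
    0 < 1 + γ * x := by
  rcases le_or_gt 0 γ with h | h
  · nlinarith
  · nlinarith [mul_le_mul_of_nonneg_left h1 (neg_nonneg.2 h.le)]

private lemma min_le_p (γ : ℝ) (hγ : γ > -1) {x : ℝ} (h0 : 0 ≤ x) (h1 : x ≤ 1) :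
    min 1 (1+γ) ≤ 1 + γ * x := by
  rcases le_or_gt 0 γ with h | h
  · have := min_le_left (1:ℝ) (1+γ); nlinarith [mul_nonneg h h0]
  · have := min_le_right (1:ℝ) (1+γ)
    nlinarith [mul_le_mul_of_nonneg_left h1 (neg_nonneg.2 h.le)]

open Set in
private lemma F_hasDeriv (γ : ℝ) (hγ : γ > -1) {ν : ℝ} (h0 : 0 < ν) (h1 : ν < 1) :
    HasDerivAt (fun t => (2+γ)/(1+γ)^((3:ℝ)/2)
          * Real.arctan (Real.sqrt (1+γ) * Real.sqrt t / Real.sqrt (1-t))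
        + γ/(1+γ) * (Real.sqrt (t*(1-t))/(1+γ*t)))
      (1 / ((1 + γ * ν) ^ 2 * Real.sqrt (ν * (1 - ν)))) ν := by
  have ha : (0:ℝ) < 1 + γ := by linarith
  have h1' : 0 < 1 - ν := by linarith
  have hx : 0 < Real.sqrt ν := Real.sqrt_pos.2 h0
  have hy : 0 < Real.sqrt (1-ν) := Real.sqrt_pos.2 h1'
  have hz : 0 < Real.sqrt (1+γ) := Real.sqrt_pos.2 ha
  have hp : 0 < 1 + γ * ν := hp_pos γ hγ h0.le h1.le
  have hxs : Real.sqrt ν ^ 2 = ν := Real.sq_sqrt h0.le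
  have hys : Real.sqrt (1-ν) ^ 2 = 1 - ν := Real.sq_sqrt h1'.le
  have hzs : Real.sqrt (1+γ) ^ 2 = 1 + γ := Real.sq_sqrt ha.le
  have hmul : Real.sqrt (ν*(1-ν)) = Real.sqrt ν * Real.sqrt (1-ν) := Real.sqrt_mul h0.le _
  set x := Real.sqrt ν with hxd
  set y := Real.sqrt (1-ν) with hyd
  set z := Real.sqrt (1+γ) with hzd
  have hxy : x^2 + y^2 = 1 := by rw [hxs, hys]; ring
  have h32 : (1+γ)^((3:ℝ)/2) = (1+γ) * z := by
    rw [hzd, Real.sqrt_eq_rpow, show (3:ℝ)/2 = 1 + 1/2 by norm_num, Real.rpow_add ha,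
      Real.rpow_one]
  have e1 : HasDerivAt (fun t : ℝ => Real.sqrt t) (1/(2*x)) ν := Real.hasDerivAt_sqrt h0.ne'
  have e2 : HasDerivAt (fun t : ℝ => Real.sqrt (1-t)) (-(1/(2*y))) ν := by
    have := (Real.hasDerivAt_sqrt h1'.ne').comp ν ((hasDerivAt_id ν).const_sub 1)
    refine this.congr_deriv (Eq.symm ?_)
    simp [hyd]
  have ht : HasDerivAt (fun t : ℝ => z * Real.sqrt t / Real.sqrt (1-t)) (z/(2*x*y^3)) ν := by
    have := (e1.const_mul z).div e2 hy.ne'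
    refine this.congr_deriv (Eq.symm ?_)
    rw [← hxd, ← hyd]
    field_simp
    ring_nf
    linear_combination (-1:ℝ)*hxy
  have harctan : HasDerivAt (fun t : ℝ => Real.arctan (z * Real.sqrt t / Real.sqrt (1-t)))
      (z / (2*x*y*(1+γ*ν))) ν := by
    have := (Real.hasDerivAt_arctan (z*x/y)).comp ν ht
    refine this.congr_deriv (Eq.symm ?_)
    have hd : 1 + (z*x/y)^2 = (1+γ*ν)/y^2 := by
      field_simp
      linear_combination hys + (1+γ)*hxs + x^2 * hzs
    rw [hd]
    field_simp
  have hm : HasDerivAt (fun t : ℝ => t*(1-t)) (1-2*ν) ν := by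
    have := (hasDerivAt_id ν).mul ((hasDerivAt_id ν).const_sub 1)
    refine this.congr_deriv (Eq.symm ?_)
    simp; ring
  have hsq : HasDerivAt (fun t : ℝ => Real.sqrt (t*(1-t))) ((1-2*ν)/(2*(x*y))) ν := by
    have := (Real.hasDerivAt_sqrt (mul_pos h0 h1').ne').comp ν hm
    refine this.congr_deriv (Eq.symm ?_)
    rw [hmul]
    ring
  have hden : HasDerivAt (fun t : ℝ => 1 + γ*t) γ ν := by
    simpa using ((hasDerivAt_id ν).const_mul γ).const_add 1
  have hB : HasDerivAt (fun t : ℝ => Real.sqrt (t*(1-t))/(1+γ*t))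
      ((1-(2+γ)*ν)/(2*(x*y)*(1+γ*ν)^2)) ν := by
    have := hsq.div hden hp.ne'
    refine this.congr_deriv (Eq.symm ?_)
    rw [hmul]
    field_simp
    ring_nf
    linear_combination (2*γ*y^2)*hxs + (2*γ*ν)*hys
  have := (harctan.const_mul ((2+γ)/(1+γ)^((3:ℝ)/2))).add (hB.const_mul (γ/(1+γ)))
  refine this.congr_deriv (Eq.symm ?_)
  rw [hmul, h32]
  field_simp
  ring

open Set in
private lemma intg1 (γ : ℝ) (hγ : γ > -1) :
    IntervalIntegrable (fun ν : ℝ => 1 / ((1 + γ * ν) ^ 2 * Real.sqrt (ν * (1 - ν))))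
      MeasureTheory.volume 0 (1/2) := by
  have ha : (0:ℝ) < 1 + γ := by linarith
  have hm : 0 < min 1 (1+γ) := lt_min one_pos ha
  have base : IntervalIntegrable (fun t : ℝ => Real.sqrt 2 / (min 1 (1+γ))^2 * t ^ (-(1/2) : ℝ))
      MeasureTheory.volume 0 (1/2) :=
    (intervalIntegral.intervalIntegrable_rpow' (by norm_num)).const_mul _
  apply base.mono_fun
  · exact (Measurable.aestronglyMeasurable (by fun_prop)).restrict
  · rw [Filter.EventuallyLE, MeasureTheory.ae_restrict_iff' measurableSet_uIoc]
    apply MeasureTheory.ae_of_all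
    intro t ht
    rw [Set.uIoc_of_le (by norm_num : (0:ℝ) ≤ 1/2)] at ht
    have h0 : 0 < t := ht.1
    have h2 : t ≤ 1/2 := ht.2
    have h1 : 0 < 1 - t := by linarith
    have hp := hp_pos γ hγ h0.le (by linarith : t ≤ 1)
    have hml := min_le_p γ hγ h0.le (by linarith : t ≤ 1)
    have hrpow : t ^ (-(1/2) : ℝ) = 1 / Real.sqrt t := by
      rw [Real.rpow_neg h0.le, Real.sqrt_eq_rpow]; exact (one_div _).symm
    have hden : (min 1 (1+γ))^2 * (Real.sqrt t * Real.sqrt (1/2))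
        ≤ (1 + γ*t)^2 * Real.sqrt (t * (1-t)) := by
      rw [Real.sqrt_mul h0.le]
      gcongr
      all_goals first | exact hm.le | exact hml | linarith
    have hpos : 0 < (min 1 (1+γ))^2 * (Real.sqrt t * Real.sqrt (1/2)) := by positivity
    rw [Real.norm_eq_abs, Real.norm_eq_abs, abs_of_nonneg (by positivity),
      abs_of_nonneg (by positivity)]
    calc 1 / ((1 + γ*t)^2 * Real.sqrt (t * (1-t)))
        ≤ 1 / ((min 1 (1+γ))^2 * (Real.sqrt t * Real.sqrt (1/2))) :=
          one_div_le_one_div_of_le hpos hden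
      _ = Real.sqrt 2 / (min 1 (1+γ))^2 * (t ^ (-(1/2) : ℝ)) := by
          rw [hrpow, show Real.sqrt (1/2) = 1 / Real.sqrt 2 by
            rw [one_div, one_div, ← Real.sqrt_inv]]
          have h2' : (0:ℝ) < Real.sqrt 2 := by positivity
          have ht' : (0:ℝ) < Real.sqrt t := Real.sqrt_pos.2 h0
          field_simp

open Set in
private lemma intg2 (γ : ℝ) (hγ : γ > -1) :
    IntervalIntegrable (fun ν : ℝ => 1 / ((1 + γ * ν) ^ 2 * Real.sqrt (ν * (1 - ν))))
      MeasureTheory.volume (1/2) 1 := by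
  have ha : (0:ℝ) < 1 + γ := by linarith
  have hm : 0 < min 1 (1+γ) := lt_min one_pos ha
  have base0 : IntervalIntegrable (fun t : ℝ => t ^ (-(1/2) : ℝ))
      MeasureTheory.volume 0 (1/2) :=
    intervalIntegral.intervalIntegrable_rpow' (by norm_num)
  have base1 := base0.comp_sub_left 1
  norm_num at base1
  have base : IntervalIntegrable (fun t : ℝ => Real.sqrt 2 / (min 1 (1+γ))^2 * (1-t) ^ (-(1/2) : ℝ))
      MeasureTheory.volume (1/2) 1 := (base1.const_mul _).symm
  apply base.mono_fun
  · exact (Measurable.aestronglyMeasurable (by fun_prop)).restrict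
  · rw [Filter.EventuallyLE, MeasureTheory.ae_restrict_iff' measurableSet_uIoc]
    apply MeasureTheory.ae_of_all
    intro t ht
    rw [Set.uIoc_of_le (by norm_num : (1/2:ℝ) ≤ 1)] at ht
    have h0 : (0:ℝ) < t := lt_of_lt_of_le (by norm_num) ht.1.le
    have h2 : t ≤ 1 := ht.2
    have h1 : 0 ≤ 1 - t := by linarith
    have hp := hp_pos γ hγ h0.le h2
    have hml := min_le_p γ hγ h0.le h2
    have hrpow : (1-t) ^ (-(1/2) : ℝ) = 1 / Real.sqrt (1-t) := by
      rw [Real.rpow_neg h1, Real.sqrt_eq_rpow]; exact (one_div _).symm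
    have hden : (min 1 (1+γ))^2 * (Real.sqrt (1/2) * Real.sqrt (1-t))
        ≤ (1 + γ*t)^2 * Real.sqrt (t * (1-t)) := by
      rw [Real.sqrt_mul h0.le]
      gcongr
      all_goals first | exact hm.le | exact hml | linarith [ht.1.le]
    rw [Real.norm_eq_abs, Real.norm_eq_abs, abs_of_nonneg (by positivity),
      abs_of_nonneg (by positivity)]
    rcases eq_or_lt_of_le h2 with rfl | h2'
    · norm_num [Real.zero_rpow]
    · have hy : 0 < Real.sqrt (1-t) := Real.sqrt_pos.2 (by linarith)
      have hpos : 0 < (min 1 (1+γ))^2 * (Real.sqrt (1/2) * Real.sqrt (1-t)) := by positivity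
      calc 1 / ((1 + γ*t)^2 * Real.sqrt (t * (1-t)))
          ≤ 1 / ((min 1 (1+γ))^2 * (Real.sqrt (1/2) * Real.sqrt (1-t))) :=
            one_div_le_one_div_of_le hpos hden
        _ = Real.sqrt 2 / (min 1 (1+γ))^2 * ((1-t) ^ (-(1/2) : ℝ)) := by
            rw [hrpow, show Real.sqrt (1/2) = 1 / Real.sqrt 2 by
              rw [one_div, one_div, ← Real.sqrt_inv]]
            have h2'' : (0:ℝ) < Real.sqrt 2 := by positivity
            field_simp

theorem integral_square (γ : ℝ) (hγ : γ > -1) :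
    ∫ ν in (0:ℝ)..1, 1 / ((1 + γ * ν) ^ 2 * Real.sqrt (ν * (1 - ν)))
      = π * (2 + γ) / (2 * (1 + γ) ^ ((3:ℝ)/2)) := by
  have ha : (0:ℝ) < 1 + γ := by linarith
  set F : ℝ → ℝ := fun t => (2+γ)/(1+γ)^((3:ℝ)/2)
        * Real.arctan (Real.sqrt (1+γ) * Real.sqrt t / Real.sqrt (1-t))
      + γ/(1+γ) * (Real.sqrt (t*(1-t))/(1+γ*t)) with hF
  set G : ℝ → ℝ := fun t => (2+γ)/(1+γ)^((3:ℝ)/2)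
        * (π/2 - Real.arctan (Real.sqrt (1-t) / (Real.sqrt (1+γ) * Real.sqrt t)))
      + γ/(1+γ) * (Real.sqrt (t*(1-t))/(1+γ*t)) with hG
  have hGF : Set.EqOn G F (Set.Ioo (0:ℝ) 1) := by
    intro t ht
    have h0 := ht.1
    have h1 := ht.2
    have hpos : 0 < Real.sqrt (1+γ) * Real.sqrt t / Real.sqrt (1-t) :=
      div_pos (mul_pos (Real.sqrt_pos.2 ha) (Real.sqrt_pos.2 h0))
        (Real.sqrt_pos.2 (by linarith))
    have hinv : Real.sqrt (1-t) / (Real.sqrt (1+γ) * Real.sqrt t)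
        = (Real.sqrt (1+γ) * Real.sqrt t / Real.sqrt (1-t))⁻¹ := by rw [inv_div]
    rw [hG, hF]
    simp only
    rw [hinv, Real.arctan_inv_of_pos hpos]
    ring
  have hFc : ContinuousOn F (Set.Icc 0 (1/2)) := by
    apply ContinuousOn.add
    · apply ContinuousOn.mul continuousOn_const
      apply Real.continuous_arctan.comp_continuousOn
      apply ContinuousOn.div
      · exact (continuous_const.mul Real.continuous_sqrt).continuousOn
      · exact (Real.continuous_sqrt.comp (continuous_const.sub continuous_id)).continuousOn
      · intro t ht
        exact Real.sqrt_ne_zero'.2 (by norm_num at ht ⊢; linarith [ht.2])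
    · apply ContinuousOn.mul continuousOn_const
      apply ContinuousOn.div
      · exact (Real.continuous_sqrt.comp
          (continuous_id.mul (continuous_const.sub continuous_id))).continuousOn
      · exact (continuous_const.add (continuous_const.mul continuous_id)).continuousOn
      · intro t ht
        exact (hp_pos γ hγ ht.1 (by norm_num at ht ⊢; linarith [ht.2])).ne'
  have hGc : ContinuousOn G (Set.Icc (1/2) 1) := by
    apply ContinuousOn.add
    · apply ContinuousOn.mul continuousOn_const
      apply ContinuousOn.sub continuousOn_const
      apply Real.continuous_arctan.comp_continuousOn
      apply ContinuousOn.div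
      · exact (Real.continuous_sqrt.comp (continuous_const.sub continuous_id)).continuousOn
      · exact (continuous_const.mul Real.continuous_sqrt).continuousOn
      · intro t ht
        have h0 : (0:ℝ) < t := lt_of_lt_of_le (by norm_num) ht.1
        exact mul_ne_zero (Real.sqrt_ne_zero'.2 ha) (Real.sqrt_ne_zero'.2 h0)
    · apply ContinuousOn.mul continuousOn_const
      apply ContinuousOn.div
      · exact (Real.continuous_sqrt.comp
          (continuous_id.mul (continuous_const.sub continuous_id))).continuousOn
      · exact (continuous_const.add (continuous_const.mul continuous_id)).continuousOn
      · intro t ht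
        have h0 : (0:ℝ) ≤ t := le_trans (by norm_num) ht.1
        exact (hp_pos γ hγ h0 ht.2).ne'
  have i1 := intg1 γ hγ
  have i2 := intg2 γ hγ
  have I1 : ∫ t in (0:ℝ)..(1/2), 1 / ((1 + γ * t) ^ 2 * Real.sqrt (t * (1 - t)))
      = F (1/2) - F 0 := by
    apply intervalIntegral.integral_eq_sub_of_hasDeriv_right_of_le (by norm_num) hFc _ i1
    intro t ht
    exact (F_hasDeriv γ hγ ht.1 (by norm_num at ht ⊢; linarith [ht.2])).hasDerivWithinAt
  have I2 : ∫ t in (1/2:ℝ)..1, 1 / ((1 + γ * t) ^ 2 * Real.sqrt (t * (1 - t)))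
      = G 1 - G (1/2) := by
    apply intervalIntegral.integral_eq_sub_of_hasDeriv_right_of_le (by norm_num) hGc _ i2
    intro t ht
    have h0 : (0:ℝ) < t := lt_trans (by norm_num) ht.1
    have hmem : Set.Ioo (0:ℝ) 1 ∈ nhds t := isOpen_Ioo.mem_nhds ⟨h0, ht.2⟩
    exact ((F_hasDeriv γ hγ h0 ht.2).congr_of_eventuallyEq
      (Filter.eventuallyEq_of_mem hmem hGF)).hasDerivWithinAt
  have hF0 : F 0 = 0 := by
    rw [hF]
    norm_num
  have hG1 : G 1 = π * (2 + γ) / (2 * (1 + γ) ^ ((3:ℝ)/2)) := by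
    rw [hG]
    norm_num
    ring
  have hhalf : G (1/2) = F (1/2) := hGF (by norm_num)
  rw [← intervalIntegral.integral_add_adjacent_intervals i1 i2, I1, I2, hF0, hG1, hhalf]
  ring
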